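/- arXiv:2211.04217 — 2 statements merged into one kernel-verified Lean document; each statement's English description precedes it below -/
import Mathlib

section
/- Let i ≥ 1 be a natural number and let D, a : ℕ → ℝ be sequences with D ℓ ≥ 0 and a ℓ ≥ 0 for all ℓ. Assume a i ≤ 2·D i, and assume that for every ℓ with 1 ≤ ℓ < i one has a ℓ ≤ 16·D ℓ and D(ℓ+1) ≤ 235885·D ℓ. Then for every ℓ with 1 ≤ ℓ ≤ i, ∑_{j=ℓ}^{i} a j ≤ 2·236145^{i−ℓ}·D ℓ. -/
theorem query_upper_bound_induction (i : ℕ) (hi : 1 ≤ i) (D a : ℕ → ℝ)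
    (hD : ∀ ℓ, 0 ≤ D ℓ) (ha : ∀ ℓ, 0 ≤ a ℓ)
    (hfin : a i ≤ 2 * D i)
    (hstep : ∀ ℓ, 1 ≤ ℓ → ℓ < i → a ℓ ≤ 16 * D ℓ ∧ D (ℓ + 1) ≤ 235885 * D ℓ) :
    ∀ ℓ, 1 ≤ ℓ → ℓ ≤ i →
      ∑ j ∈ Finset.Icc ℓ i, a j ≤ 2 * (236145 : ℝ) ^ (i - ℓ) * D ℓ := by
  suffices h : ∀ n ℓ, 1 ≤ ℓ → ℓ + n = i →
      ∑ j ∈ Finset.Icc ℓ i, a j ≤ 2 * (236145 : ℝ) ^ n * D ℓ by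
    intro ℓ h1 h2
    have := h (i - ℓ) ℓ h1 (by omega)
    simpa using this
  intro n
  induction n with
  | zero =>
    intro ℓ h1 h2
    have : ℓ = i := by omega
    subst this
    simpa using hfin
  | succ n ih =>
    intro ℓ h1 h2
    have hlt : ℓ < i := by omega
    obtain ⟨ha1, hd1⟩ := hstep ℓ h1 hlt
    have hih := ih (ℓ + 1) (by omega) (by omega)
    have hsplit : ∑ j ∈ Finset.Icc ℓ i, a j = a ℓ + ∑ j ∈ Finset.Icc (ℓ + 1) i, a j := by
      rw [show Finset.Icc ℓ i = insert ℓ (Finset.Icc (ℓ + 1) i) by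
            rw [Finset.Icc_add_one_left_eq_Ioc, Finset.Ioc_insert_left (by omega : ℓ ≤ i)],
          Finset.sum_insert (by simp)]
    have hpow : (1 : ℝ) ≤ (236145 : ℝ) ^ n := one_le_pow₀ (by norm_num)
    have hDpos := hD ℓ
    calc ∑ j ∈ Finset.Icc ℓ i, a j
        = a ℓ + ∑ j ∈ Finset.Icc (ℓ + 1) i, a j := hsplit
      _ ≤ 16 * D ℓ + 2 * (236145 : ℝ) ^ n * D (ℓ + 1) := by linarith
      _ ≤ 16 * D ℓ + 2 * (236145 : ℝ) ^ n * (235885 * D ℓ) := by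
          have : (0:ℝ) ≤ 2 * (236145 : ℝ) ^ n := by positivity
          nlinarith
      _ ≤ 2 * (236145 : ℝ) ^ (n + 1) * D ℓ := by
          rw [pow_succ]
          nlinarith
end

section
/- Let (V, d) be a pseudometric space, S ⊆ V a nonempty set, and pd : V → ℝ a function such that infDist(v, S) ≤ pd(v) ≤ 4·infDist(v, S) for every v ∈ V. Let ℓ ≥ 1 and let y_0, y_1, …, y_ℓ ∈ V be points such that d(y_s, y_{s+1}) > (1/4)·pd(y_s) for every 0 ≤ s ≤ ℓ−1, and let D ∈ ℝ satisfy ∑_{s=0}^{ℓ−1} d(y_s, y_{s+1}) ≤ D. Then ∑_{s=1}^{ℓ} pd(y_s) ≤ 20·D. -/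
theorem sum_pivotDist_segment_endpoints {V : Type*} [PseudoMetricSpace V]
    (S : Set V) (hS : S.Nonempty) (pd : V → ℝ)
    (hpd : ∀ v : V, Metric.infDist v S ≤ pd v ∧ pd v ≤ 4 * Metric.infDist v S)
    (ℓ : ℕ) (hℓ : 1 ≤ ℓ) (y : ℕ → V)
    (hfar : ∀ s < ℓ, (1 / 4) * pd (y s) < dist (y s) (y (s + 1)))
    (D : ℝ) (hD : ∑ s ∈ Finset.range ℓ, dist (y s) (y (s + 1)) ≤ D) :
    ∑ s ∈ Finset.Icc 1 ℓ, pd (y s) ≤ 20 * D := by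
  have key : ∀ s < ℓ, pd (y (s + 1)) ≤ 20 * dist (y s) (y (s + 1)) := by
    intro s hs
    have h1 := (hpd (y (s + 1))).2
    have h2 : Metric.infDist (y (s + 1)) S ≤ Metric.infDist (y s) S + dist (y (s+1)) (y s) :=
      Metric.infDist_le_infDist_add_dist
    have h3 := (hpd (y s)).1
    have h4 := hfar s hs
    have h5 : dist (y (s+1)) (y s) = dist (y s) (y (s+1)) := dist_comm _ _
    nlinarith
  have heq : ∑ s ∈ Finset.Icc 1 ℓ, pd (y s)
      = ∑ s ∈ Finset.range ℓ, pd (y (s + 1)) := by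
    rw [← Finset.Ico_add_one_right_eq_Icc, Finset.sum_Ico_eq_sum_range]
    simp [Nat.add_comm]
  rw [heq]
  calc ∑ s ∈ Finset.range ℓ, pd (y (s + 1))
      ≤ ∑ s ∈ Finset.range ℓ, 20 * dist (y s) (y (s + 1)) := by
        apply Finset.sum_le_sum
        intro s hs
        exact key s (Finset.mem_range.mp hs)
    _ = 20 * ∑ s ∈ Finset.range ℓ, dist (y s) (y (s + 1)) := by
        rw [Finset.mul_sum]
    _ ≤ 20 * D := by linarith
end
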